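/- The standard-representation so(N) weight of a permutation is invariant under cyclic shift: for every integer N ≥ 1, every m ≥ 1, and every permutation α of {1,…,m}, W_N(σ⁻¹ ∘ α ∘ σ) = W_N(α), where σ is the long cycle σ(k) = k+1 for k < m and σ(m) = 1. -/

import Mathlib

open Matrix

/-- The standard generators `X_{ij} = E_{ij} - E_{N+1-j, N+1-i}` of `so(N)`,
as `N × N` matrices over `ℚ` (indices zero-based, so `N+1-i` becomes `Fin.rev i`). -/
noncomputable def soGen (N : ℕ) (i j : Fin N) : Matrix (Fin N) (Fin N) ℚ :=
  Matrix.single i j 1 - Matrix.single j.rev i.rev 1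

/-- `W_N(α) = Tr (Σ_{i₁,…,i_m} X_{i₁ i_{α(1)}} ⋯ X_{i_m i_{α(m)}})`,
the (un-normalized) standard-representation so(N) weight of a permutation
`α` of `{1,…,m}`; the product is taken in order of increasing position. -/
noncomputable def soWeight (N m : ℕ) (α : Equiv.Perm (Fin m)) : ℚ :=
  Matrix.trace (∑ i : Fin m → Fin N,
    ((List.finRange m).map fun k => soGen N (i k) (i (α k))).prod)

lemma finRange_map_finRotate (m : ℕ) :
    (List.finRange m).map (finRotate m) = (List.finRange m).rotate 1 := by
  apply List.ext_getElem
  · simp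
  · intro n h1 h2
    simp only [List.length_map, List.length_finRange] at h1
    match m, h1 with
    | (m+1), h1 =>
      simp only [List.getElem_map, List.getElem_rotate, List.getElem_finRange,
        List.length_finRange, finRotate_succ_apply, Fin.cast_mk]
      ext
      simp only [Fin.add_def, Fin.val_one']
      conv_rhs => rw [Nat.add_mod]
      rw [Nat.mod_eq_of_lt h1]

lemma trace_rotate {n : ℕ} (l : List (Matrix (Fin n) (Fin n) ℚ)) (hl : l ≠ []) :
    Matrix.trace (l.rotate 1).prod = Matrix.trace l.prod := by
  rw [List.rotate_eq_drop_append_take (by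
    cases l with | nil => exact absurd rfl hl | cons a t => simp),
    List.prod_append, Matrix.trace_mul_comm, ← List.prod_append, List.take_append_drop]

/-- The standard-representation so(N) weight is invariant under cyclic shift:
`W_N(σ⁻¹ ∘ α ∘ σ) = W_N(α)` where `σ` is the long cycle `k ↦ k+1 (mod m)`. -/
theorem soWeight_cyclicShift (N m : ℕ) (hN : 1 ≤ N) (hm : 1 ≤ m)
    (α : Equiv.Perm (Fin m)) :
    soWeight N m ((finRotate m)⁻¹ * α * finRotate m) = soWeight N m α := by
  unfold soWeight
  rw [Matrix.trace_sum, Matrix.trace_sum]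
  let e : (Fin m → Fin N) ≃ (Fin m → Fin N) :=
    Equiv.arrowCongr (finRotate m).symm (Equiv.refl (Fin N))
  rw [← Equiv.sum_comp e
    (fun i => Matrix.trace ((List.finRange m).map
      fun k => soGen N (i k) (i (((finRotate m)⁻¹ * α * finRotate m) k))).prod)]
  refine Finset.sum_congr rfl fun i _ => ?_
  have he : ∀ k, e i k = i (finRotate m k) := fun k => rfl
  simp only [he, Equiv.Perm.mul_apply, Equiv.Perm.inv_def, Equiv.symm_apply_apply,
    Equiv.apply_symm_apply]
  have : ((List.finRange m).map fun k =>
      soGen N (i (finRotate m k)) (i (α (finRotate m k)))).prod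
      = (((List.finRange m).map (finRotate m)).map fun k =>
      soGen N (i k) (i (α k))).prod := by
    rw [List.map_map]; rfl
  rw [this, finRange_map_finRotate, List.map_rotate, trace_rotate]
  simp only [ne_eq, List.map_eq_nil_iff, List.finRange_eq_nil_iff]
  omega
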